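/- For every permutation λ ∈ S_n, zeil(λ) = min(rmax(λ), tl(s(λ))), where zeil(λ) is the largest m such that n, n-1, ..., n-m+1 appear in decreasing order (of position) in λ, rmax(λ) is the number of right-to-left maxima of λ, and tl(μ) is the largest k such that the last k entries of μ are n-k+1, n-k+2, ..., n in that order. -/

import Mathlib

/-- `l` is a permutation of `{1, …, n}`, written as a word. -/
def IsPermList (n : ℕ) (l : List ℕ) : Prop := l.Perm (List.range' 1 n)

/-- The word obtained from `l` by exchanging the positions of the entries `i` and `i+1`. -/
def swapEntries (i : ℕ) (l : List ℕ) : List ℕ :=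
  l.map fun x => if x = i then i + 1 else if x = i + 1 then i else x

/-- Some entry larger than `i+1` appears (strictly) between the entries `i` and `i+1`
in the word `l`. -/
def ToggleApplies (i : ℕ) (l : List ℕ) : Prop :=
  ∃ a ∈ l, i + 1 < a ∧
    min (l.idxOf i) (l.idxOf (i + 1)) < l.idxOf a ∧
    l.idxOf a < max (l.idxOf i) (l.idxOf (i + 1))

open scoped Classical in
/-- The polyurethane toggle `p i`. -/
noncomputable def toggle (i : ℕ) (l : List ℕ) : List ℕ :=
  if ToggleApplies i l then swapEntries i l else l

lemma max_getD_mem (l : List ℕ) (h : l ≠ []) : l.max?.getD 0 ∈ l := by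
  rcases hm : l.max? with _ | m'
  · exact absurd (List.max?_eq_none_iff.mp hm) h
  · simpa using List.max?_mem hm

lemma length_takeWhile_lt (p : ℕ → Bool) (l : List ℕ) (x : ℕ) (hx : x ∈ l) (hpx : p x = false) :
    (l.takeWhile p).length < l.length := by
  rcases Nat.lt_or_ge (l.takeWhile p).length l.length with h | h
  · exact h
  · have := List.takeWhile_eq_self_iff.mp ((List.takeWhile_sublist p).eq_of_length_le h) x hx
    rw [hpx] at this; exact absurd this (by simp)

lemma length_dropWhile_tail_lt (p : ℕ → Bool) (l : List ℕ) (h : l ≠ []) :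
    ((l.dropWhile p).tail).length < l.length := by
  have h1 : (l.dropWhile p).length ≤ l.length := (List.dropWhile_sublist _).length_le
  have h2 : ((l.dropWhile p).tail).length ≤ (l.dropWhile p).length - 1 := by
    simp [List.length_tail]
  have : 0 < l.length := List.length_pos_iff.mpr h
  omega

/-- West's stack-sorting map `s`: `s([]) = []` and `s(LmR) = s(L) s(R) m`,
where `m` is the largest entry. -/
def stackSort : List ℕ → List ℕ
  | [] => []
  | a :: rest =>
    stackSort ((a :: rest).takeWhile (· ≠ (a :: rest).max?.getD 0)) ++
      stackSort (((a :: rest).dropWhile (· ≠ (a :: rest).max?.getD 0)).tail) ++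
      [(a :: rest).max?.getD 0]
termination_by l => l.length
decreasing_by
  · exact length_takeWhile_lt _ _ _ (max_getD_mem (a :: rest) (by simp)) (by simp)
  · exact length_dropWhile_tail_lt _ _ (by simp)

open scoped Classical in
/-- The Zeilberger statistic: the largest `m` such that the entries `n, n-1, …, n-m+1`
appear in decreasing order (of position) in `l`. -/
noncomputable def zeil (n : ℕ) (l : List ℕ) : ℕ :=
  Nat.findGreatest
    (fun m => ∀ j, 1 ≤ j → j < m → l.idxOf (n - j + 1) < l.idxOf (n - j)) n

open scoped Classical in
/-- The number of right-to-left maxima of `l`. -/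
noncomputable def rmax (l : List ℕ) : ℕ :=
  ((Finset.range l.length).filter
    fun k => ∀ k', k < k' → k' < l.length → l.getD k' 0 < l.getD k 0).card

open scoped Classical in
/-- The tail length of a permutation of `{1, …, n}`: the largest `k` such that the last
`k` entries are `n-k+1, n-k+2, …, n` in this order. -/
noncomputable def tl (n : ℕ) (l : List ℕ) : ℕ :=
  Nat.findGreatest
    (fun k => ∀ j, 1 ≤ j → j ≤ k → l.getD (n - k + j - 1) 0 = n - k + j) n


/-! ### Auxiliary definitions -/

/-- maximum helper -/
lemma le_max_getD {l : List ℕ} {x : ℕ} (h : x ∈ l) : x ≤ l.max?.getD 0 := by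
  rcases hm : l.max? with _ | a
  · simp [List.max?_eq_none_iff.mp hm] at h
  · have := (List.max?_le_iff hm (x := a)).mp le_rfl x h
    simpa using this

/-- The chain statistic (generalized zeil). -/
def chainC (v : ℕ) (l : List ℕ) : ℕ :=
  if h : v ∈ l then 1 + chainC (v - 1) (l.drop (l.idxOf v + 1)) else 0
termination_by l.length
decreasing_by
  have : l.idxOf v < l.length := List.idxOf_lt_length_iff.mpr h
  simp only [List.length_drop]
  omega

lemma chainC_eq (v : ℕ) (l : List ℕ) :
    chainC v l = if h : v ∈ l then 1 + chainC (v - 1) (l.drop (l.idxOf v + 1)) else 0 := by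
  rw [chainC]

/-- generalized rmax -/
def rmaxG : List ℕ → ℕ
  | [] => 0
  | a :: t => (if ∀ b ∈ t, b < a then 1 else 0) + rmaxG t

/-- generalized tail-length helper, reading from the front of the reversed list -/
def tlAux : ℕ → List ℕ → ℕ
  | _, [] => 0
  | u, a :: t => if a = u then 1 + tlAux (u - 1) t else 0

/-- generalized tail length -/
def tlG (u : ℕ) (m : List ℕ) : ℕ := tlAux u m.reverse

lemma rmaxG_cons (a : ℕ) (t : List ℕ) :
    rmaxG (a :: t) = (if ∀ b ∈ t, b < a then 1 else 0) + rmaxG t := rfl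

lemma rmaxG_le_length (l : List ℕ) : rmaxG l ≤ l.length := by
  induction l with
  | nil => simp [rmaxG]
  | cons a t ih =>
    rw [rmaxG_cons]
    simp only [List.length_cons]
    split <;> omega

lemma rmaxG_append (L R : List ℕ) (v : ℕ) (hL : ∀ x ∈ L, x < v) (hR : ∀ x ∈ R, x < v) :
    rmaxG (L ++ v :: R) = 1 + rmaxG R := by
  induction L with
  | nil =>
    rw [List.nil_append, rmaxG_cons, if_pos hR]
  | cons a L ih =>
    have ha : a < v := hL a (by simp)
    have hcond : ¬ ∀ b ∈ L ++ v :: R, b < a := by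
      intro hc
      have := hc v (by simp)
      omega
    rw [List.cons_append, rmaxG_cons, if_neg hcond, Nat.zero_add]
    exact ih (fun x hx => hL x (by simp [hx]))

lemma tlAux_cons (u a : ℕ) (t : List ℕ) :
    tlAux u (a :: t) = if a = u then 1 + tlAux (u - 1) t else 0 := rfl

lemma tlAux_le (r : List ℕ) : ∀ u, tlAux u r ≤ r.length := by
  induction r with
  | nil => intro u; simp [tlAux]
  | cons a t ih =>
    intro u
    simp only [tlAux, List.length_cons]
    split
    · have := ih (u - 1); omega
    · omega

lemma tlAux_spec (r : List ℕ) : ∀ u i, i < tlAux u r → r.getD i 0 = u - i := by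
  induction r with
  | nil => intro u i h; simp [tlAux] at h
  | cons a t ih =>
    intro u i h
    simp only [tlAux] at h
    split at h
    · rename_i ha
      cases i with
      | zero => simpa using ha
      | succ i =>
        have := ih (u - 1) i (by omega)
        simpa [Nat.sub_sub, Nat.add_comm] using this
    · omega

lemma tlAux_max (r : List ℕ) : ∀ u, tlAux u r < r.length →
    r.getD (tlAux u r) 0 ≠ u - tlAux u r := by
  induction r with
  | nil => intro u h; simp at h
  | cons a t ih =>
    intro u h
    by_cases ha : a = u
    · have he : tlAux u (a :: t) = 1 + tlAux (u - 1) t := by simp [tlAux, ha]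
      rw [he] at h ⊢
      simp only [List.length_cons] at h
      have h2 := ih (u - 1) (by omega)
      rw [Nat.add_comm 1 _, List.getD_cons_succ,
        show u - (tlAux (u - 1) t + 1) = u - 1 - tlAux (u - 1) t by omega]
      exact h2
    · have he : tlAux u (a :: t) = 0 := by simp [tlAux, ha]
      rw [he]
      simpa using ha

lemma tlAux_prefix_le (r₂ : List ℕ) : ∀ u r₁, tlAux u r₂ ≤ tlAux u (r₂ ++ r₁) := by
  induction r₂ with
  | nil => intro u r₁; simp [tlAux]
  | cons a t ih =>
    intro u r₁
    by_cases ha : a = u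
    · rw [List.cons_append, tlAux_cons, tlAux_cons, if_pos ha, if_pos ha]
      have := ih (u - 1) r₁; omega
    · simp [tlAux, ha]

lemma tlAux_prefix_eq (r₂ : List ℕ) : ∀ u r₁, tlAux u r₂ < r₂.length →
    tlAux u (r₂ ++ r₁) = tlAux u r₂ := by
  induction r₂ with
  | nil => intro u r₁ h; simp at h
  | cons a t ih =>
    intro u r₁ h
    by_cases ha : a = u
    · rw [tlAux_cons, if_pos ha, List.length_cons] at h
      rw [List.cons_append, tlAux_cons, tlAux_cons, if_pos ha, if_pos ha,
        ih (u - 1) r₁ (by omega)]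
    · simp [tlAux, ha]

lemma tlG_concat (u a : ℕ) (m : List ℕ) :
    tlG u (m ++ [a]) = if a = u then 1 + tlG (u - 1) m else 0 := by
  simp only [tlG, List.reverse_append, List.reverse_cons, List.reverse_nil, List.nil_append,
    List.cons_append, List.nil_append, tlAux]

lemma tlG_le (u : ℕ) (m : List ℕ) : tlG u m ≤ m.length := by
  simpa [tlG] using tlAux_le m.reverse u

lemma tlG_append_le (u : ℕ) (m₁ m₂ : List ℕ) : tlG u m₂ ≤ tlG u (m₁ ++ m₂) := by
  rw [tlG, tlG, List.reverse_append]
  exact tlAux_prefix_le m₂.reverse u m₁.reverse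

lemma tlG_append_eq (u : ℕ) (m₁ m₂ : List ℕ) (h : tlG u m₂ < m₂.length) :
    tlG u (m₁ ++ m₂) = tlG u m₂ := by
  rw [tlG, tlG, List.reverse_append]
  exact tlAux_prefix_eq m₂.reverse u m₁.reverse (by simpa [tlG] using h)

/-! ### Decomposition of a list at its maximum -/

lemma split_at_max (l : List ℕ) (h : l ≠ []) :
    l = l.takeWhile (· ≠ l.max?.getD 0) ++
      l.max?.getD 0 :: (l.dropWhile (· ≠ l.max?.getD 0)).tail := by
  have hv : l.max?.getD 0 ∈ l := max_getD_mem l h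
  set v := l.max?.getD 0 with hvdef
  have hd : l.dropWhile (fun x => x ≠ v : ℕ → Bool) ≠ [] := by
    intro hdd
    have := (List.dropWhile_eq_nil_iff).mp hdd v hv
    simp at this
  have hh : (l.dropWhile (fun x => x ≠ v : ℕ → Bool)).head hd = v := by
    have := List.head_dropWhile_not (fun x => x ≠ v : ℕ → Bool) hd
    simpa using this
  have hdc : l.dropWhile (fun x => x ≠ v : ℕ → Bool) =
      v :: (l.dropWhile (fun x => x ≠ v : ℕ → Bool)).tail := by
    conv_lhs => rw [← List.cons_head_tail hd]
    rw [hh]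
  conv_lhs => rw [← List.takeWhile_append_dropWhile (p := (fun x => x ≠ v : ℕ → Bool)) (l := l)]
  exact congrArg (List.takeWhile (fun x => x ≠ v : ℕ → Bool) l ++ ·) hdc

lemma stackSort_ne_nil_eq (l : List ℕ) (h : l ≠ []) :
    stackSort l = stackSort (l.takeWhile (· ≠ l.max?.getD 0)) ++
      stackSort ((l.dropWhile (· ≠ l.max?.getD 0)).tail) ++ [l.max?.getD 0] := by
  cases l with
  | nil => simp at h
  | cons a rest => rw [stackSort]

lemma stackSort_perm : ∀ (N : ℕ) (l : List ℕ), l.length ≤ N → (stackSort l).Perm l := by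
  intro N
  induction N with
  | zero =>
    intro l hl
    have : l = [] := List.length_eq_zero_iff.mp (by omega)
    subst this
    rw [stackSort]
  | succ N ih =>
    intro l hl
    rcases eq_or_ne l [] with rfl | hne
    · rw [stackSort]
    · set v := l.max?.getD 0 with hv
      set L := l.takeWhile (· ≠ v) with hL
      set R := (l.dropWhile (· ≠ v)).tail with hR
      have hsplit : l = L ++ v :: R := split_at_max l hne
      have hlen : l.length = L.length + 1 + R.length := by
        rw [hsplit]; simp; omega
      have hLp := ih L (by omega)
      have hRp := ih R (by omega)
      rw [stackSort_ne_nil_eq l hne, ← hv, ← hL, ← hR]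
      have h1 : (stackSort L ++ stackSort R ++ [v]).Perm (L ++ (R ++ [v])) := by
        rw [List.append_assoc]
        exact hLp.append (hRp.append (List.Perm.refl _))
      have h2 : (R ++ [v]).Perm (v :: R) := List.perm_append_singleton v R
      have h3 : (L ++ (R ++ [v])).Perm l := by
        rw [hsplit]
        exact h2.append_left L
      exact h1.trans h3

lemma stackSort_length (l : List ℕ) : (stackSort l).length = l.length :=
  (stackSort_perm l.length l le_rfl).length_eq

/-! ### chainC lemmas -/

lemma chainC_split (L R : List ℕ) (v : ℕ) (hL : v ∉ L) :
    chainC v (L ++ v :: R) = 1 + chainC (v - 1) R := by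
  rw [chainC_eq]
  have hm : v ∈ L ++ v :: R := by simp
  rw [dif_pos hm]
  have hidx : (L ++ v :: R).idxOf v = L.length := by
    rw [List.idxOf_append_of_notMem hL]
    simp [List.idxOf_cons_eq]
  rw [hidx, show L.length + 1 = L.length + 1 from rfl]
  have : (L ++ v :: R).drop (L.length + 1) = R := by
    have := List.drop_append (l₁ := L) (l₂ := v :: R) (i := L.length + 1)
    simpa using this
  rw [this]

lemma indexOf_drop_eq (l : List ℕ) (hnd : l.Nodup) (j : ℕ) (x : ℕ) (hx : x ∈ l.drop j) :
    l.idxOf x = j + (l.drop j).idxOf x := by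
  have hj : j < l.length := by
    by_contra hc
    rw [List.drop_eq_nil_of_le (by omega)] at hx
    simp at hx
  have hsplit := List.take_append_drop j l
  have hnd' : (l.take j ++ l.drop j).Nodup := by rw [hsplit]; exact hnd
  have hxA : x ∉ l.take j := fun hxa =>
    (List.disjoint_of_nodup_append hnd') hxa hx
  conv_lhs => rw [← hsplit]
  rw [List.idxOf_append_of_notMem hxA, List.length_take]
  congr 1
  omega

lemma mem_drop_of_indexOf_gt (l : List ℕ) (j : ℕ) (x : ℕ) (hx : x ∈ l)
    (h : j ≤ l.idxOf x) : x ∈ l.drop j := by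
  have hsplit := List.take_append_drop j l
  rcases (List.mem_append.mp (by rw [hsplit]; exact hx)) with hA | hB
  · exfalso
    have heq : l.idxOf x = (l.take j).idxOf x := by
      conv_lhs => rw [← hsplit]
      exact List.idxOf_append_of_mem hA
    have h2 : (l.take j).idxOf x < j :=
      lt_of_lt_of_le (List.idxOf_lt_length_iff.mpr hA) (by simpa using List.length_take_le j l)
    omega
  · exact hB

lemma chainC_mem : ∀ (N : ℕ) (l : List ℕ), l.length ≤ N →
    ∀ v i, i < chainC v l → v - i ∈ l := by
  intro N
  induction N with
  | zero =>
    intro l hl v i hi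
    have : l = [] := List.length_eq_zero_iff.mp (by omega)
    subst this
    rw [chainC_eq] at hi
    simp at hi
  | succ N ih =>
    intro l hl v i hi
    rw [chainC_eq] at hi
    by_cases hv : v ∈ l
    · rw [dif_pos hv] at hi
      cases i with
      | zero => simpa using hv
      | succ i =>
        have hlt : l.idxOf v < l.length := List.idxOf_lt_length_iff.mpr hv
        have hlen : (l.drop (l.idxOf v + 1)).length ≤ N := by
          simp only [List.length_drop]; omega
        have := ih _ hlen (v - 1) i (by omega)
        have hsub : v - 1 - i = v - (i + 1) := by omega
        rw [hsub] at this
        exact List.mem_of_mem_drop this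
    · rw [dif_neg hv] at hi; omega

lemma chainC_ord : ∀ (N : ℕ) (l : List ℕ), l.length ≤ N → l.Nodup →
    ∀ v i, i + 1 < chainC v l → l.idxOf (v - i) < l.idxOf (v - i - 1) := by
  intro N
  induction N with
  | zero =>
    intro l hl _ v i hi
    have : l = [] := List.length_eq_zero_iff.mp (by omega)
    subst this
    rw [chainC_eq] at hi
    simp at hi
  | succ N ih =>
    intro l hl hnd v i hi
    rw [chainC_eq] at hi
    by_cases hv : v ∈ l
    · rw [dif_pos hv] at hi
      set j := l.idxOf v + 1 with hj
      set B := l.drop j with hB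
      have hlt : l.idxOf v < l.length := List.idxOf_lt_length_iff.mpr hv
      have hlen : B.length ≤ N := by
        simp only [hB, List.length_drop]; omega
      have hndB : B.Nodup := hnd.sublist (List.drop_sublist j l)
      cases i with
      | zero =>
        -- show indexOf v < indexOf (v - 1)
        have hm : v - 1 - 0 ∈ B := chainC_mem N B hlen (v - 1) 0 (by omega)
        simp only [Nat.sub_zero] at hm ⊢
        have := indexOf_drop_eq l hnd j (v - 1) hm
        rw [this]
        omega
      | succ i =>
        have hm1 : v - 1 - i ∈ B := chainC_mem N B hlen (v - 1) i (by omega)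
        have hm2 : v - 1 - (i + 1) ∈ B := chainC_mem N B hlen (v - 1) (i + 1) (by omega)
        have hord := ih B hlen hndB (v - 1) i (by omega)
        have e1 := indexOf_drop_eq l hnd j _ hm1
        have e2 := indexOf_drop_eq l hnd j _ hm2
        have hs1 : v - 1 - i = v - (i + 1) := by omega
        rw [hs1] at e1 hord
        have hs3 : v - 1 - (i + 1) = v - (i + 1) - 1 := by omega
        rw [hs3] at hm2 e2
        rw [e1, e2]
        exact Nat.add_lt_add_left hord j
    · rw [dif_neg hv] at hi; omega

lemma chainC_ge : ∀ (N : ℕ) (l : List ℕ), l.length ≤ N → l.Nodup →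
    ∀ v m, (∀ i < m, v - i ∈ l) →
      (∀ i, i + 1 < m → l.idxOf (v - i) < l.idxOf (v - i - 1)) →
      m ≤ chainC v l := by
  intro N
  induction N with
  | zero =>
    intro l hl _ v m hmem _
    cases m with
    | zero => omega
    | succ m =>
      have : l = [] := List.length_eq_zero_iff.mp (by omega)
      subst this
      exact absurd (hmem 0 (by omega)) (by simp)
  | succ N ih =>
    intro l hl hnd v m hmem hord
    cases m with
    | zero => omega
    | succ m =>
      have hv : v ∈ l := by simpa using hmem 0 (by omega)
      rw [chainC_eq, dif_pos hv]
      set j := l.idxOf v + 1 with hj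
      set B := l.drop j with hB
      have hlt : l.idxOf v < l.length := List.idxOf_lt_length_iff.mpr hv
      have hlen : B.length ≤ N := by
        simp only [hB, List.length_drop]; omega
      have hndB : B.Nodup := hnd.sublist (List.drop_sublist j l)
      -- each element of the chain after v lies strictly to the right of v
      have key : ∀ k, k < m + 1 → 0 < k → l.idxOf v < l.idxOf (v - k) := by
        intro k
        induction k with
        | zero => omega
        | succ k ihk =>
          intro hk _
          rcases Nat.eq_zero_or_pos k with rfl | hkpos
          · simpa using hord 0 (by omega)
          · refine lt_trans (ihk (by omega) hkpos) ?_
            have := hord k (by omega)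
            have hs : v - k - 1 = v - (k + 1) := by omega
            rwa [hs] at this
      have hmemB : ∀ i < m, v - 1 - i ∈ B := by
        intro i him
        have hx : v - (i + 1) ∈ l := hmem (i + 1) (by omega)
        have hgt : l.idxOf v < l.idxOf (v - (i + 1)) := key (i + 1) (by omega) (by omega)
        have hjlt : j ≤ l.idxOf (v - (i + 1)) := by
          rw [hj]
          omega
        have hmB : v - (i + 1) ∈ B := mem_drop_of_indexOf_gt l j _ hx hjlt
        have hs : v - 1 - i = v - (i + 1) := by omega
        rwa [hs]
      have hordB : ∀ i, i + 1 < m → B.idxOf (v - 1 - i) < B.idxOf (v - 1 - i - 1) := by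
        intro i hi
        have hm1 : v - 1 - i ∈ B := hmemB i (by omega)
        have hm2 : v - 1 - (i + 1) ∈ B := hmemB (i + 1) (by omega)
        have e1 := indexOf_drop_eq l hnd j _ hm1
        have e2 := indexOf_drop_eq l hnd j _ hm2
        have horig := hord (i + 1) (by omega)
        have hs1 : v - (i + 1) = v - 1 - i := by omega
        have hs2 : v - 1 - (i + 1) = v - 1 - i - 1 := by omega
        rw [hs1] at horig
        rw [hs2] at e2 hm2
        rw [e1, e2] at horig
        exact Nat.lt_of_add_lt_add_left horig
      have := ih B hlen hndB (v - 1) m hmemB hordB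
      omega

lemma chainC_le : ∀ (N : ℕ) (l : List ℕ), l.length ≤ N → (∀ x ∈ l, 1 ≤ x) →
    ∀ v, chainC v l ≤ v := by
  intro N
  induction N with
  | zero =>
    intro l hl _ v
    have : l = [] := List.length_eq_zero_iff.mp (by omega)
    subst this
    rw [chainC_eq]
    simp
  | succ N ih =>
    intro l hl hpos v
    rw [chainC_eq]
    by_cases hv : v ∈ l
    · rw [dif_pos hv]
      have hv1 : 1 ≤ v := hpos v hv
      have hlt : l.idxOf v < l.length := List.idxOf_lt_length_iff.mpr hv
      have hlen : (l.drop (l.idxOf v + 1)).length ≤ N := by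
        simp only [List.length_drop]; omega
      have := ih _ hlen (fun x hx => hpos x (List.mem_of_mem_drop hx)) (v - 1)
      omega
    · rw [dif_neg hv]; omega

/-! ### Main generalized lemma -/

lemma main_aux : ∀ (N : ℕ) (l : List ℕ), l.length ≤ N → l.Nodup → (∀ x ∈ l, 1 ≤ x) →
    l ≠ [] → chainC (l.max?.getD 0) l = min (rmaxG l) (tlG (l.max?.getD 0) (stackSort l)) := by
  intro N
  induction N with
  | zero =>
    intro l hl _ _ hne
    exact absurd (List.length_eq_zero_iff.mp (by omega)) hne
  | succ N ih =>
    intro l hl hnd hpos hne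
    set v := l.max?.getD 0 with hv
    set L := l.takeWhile (· ≠ v) with hLdef
    set R := (l.dropWhile (· ≠ v)).tail with hRdef
    have hsplit : l = L ++ v :: R := split_at_max l hne
    have hlen : l.length = L.length + 1 + R.length := by
      rw [hsplit]; simp; omega
    have hndLR : (L ++ v :: R).Nodup := by rw [← hsplit]; exact hnd
    have hvR : v ∉ R := by
      have := (List.nodup_append.mp hndLR).2.1
      exact (List.nodup_cons.mp this).1
    have hvL : v ∉ L := by
      intro hmem
      have := List.mem_takeWhile_imp (l := l) (p := (· ≠ v)) hmem
      simp at this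
    have hLlt : ∀ x ∈ L, x < v := by
      intro x hx
      have h1 : x ≤ v := le_max_getD (by rw [hsplit]; exact List.mem_append_left _ hx)
      have h2 : x ≠ v := fun he => hvL (he ▸ hx)
      omega
    have hRlt : ∀ x ∈ R, x < v := by
      intro x hx
      have h1 : x ≤ v := le_max_getD (by rw [hsplit]; simp [hx])
      have h2 : x ≠ v := fun he => hvR (he ▸ hx)
      omega
    -- chain
    have hchain : chainC v l = 1 + chainC (v - 1) R := by
      conv_lhs => rw [hsplit]
      exact chainC_split L R v hvL
    -- rmax
    have hrmax : rmaxG l = 1 + rmaxG R := by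
      conv_lhs => rw [hsplit]
      exact rmaxG_append L R v hLlt hRlt
    -- stackSort
    have hss : stackSort l = (stackSort L ++ stackSort R) ++ [v] := by
      rw [stackSort_ne_nil_eq l hne, ← hv, ← hLdef, ← hRdef, List.append_assoc]
    have htl : tlG v (stackSort l) = 1 + tlG (v - 1) (stackSort L ++ stackSort R) := by
      rw [hss, tlG_concat, if_pos rfl]
    rw [hchain, hrmax, htl]
    have hndR : R.Nodup := by
      have := (List.nodup_append.mp hndLR).2.1
      exact (List.nodup_cons.mp this).2
    have hposR : ∀ x ∈ R, 1 ≤ x := fun x hx => hpos x (by rw [hsplit]; simp [hx])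
    rcases eq_or_ne R [] with hR0 | hRne
    · have hc0 : chainC (v - 1) R = 0 := by rw [hR0, chainC_eq]; simp
      have hr0 : rmaxG R = 0 := by rw [hR0]; rfl
      rw [hc0, hr0]
      omega
    · -- R nonempty
      set w := R.max?.getD 0 with hw
      have hwR : w ∈ R := max_getD_mem R hRne
      have hwlt : w < v := hRlt w hwR
      have hIH : chainC w R = min (rmaxG R) (tlG w (stackSort R)) :=
        ih R (by omega) hndR hposR hRne
      -- stackSort R ends with w
      obtain ⟨Y, hY⟩ : ∃ Y, stackSort R = Y ++ [w] :=
        ⟨stackSort (R.takeWhile (· ≠ w)) ++ stackSort ((R.dropWhile (· ≠ w)).tail),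
          by rw [stackSort_ne_nil_eq R hRne, ← hw]⟩
      by_cases hv1 : v - 1 ∈ R
      · -- then w = v - 1
        have hwe : w = v - 1 := by
          have h1 : v - 1 ≤ w := le_max_getD hv1
          omega
        rw [← hwe]
        have htRle : tlG w (stackSort R) ≤ R.length := by
          have := tlG_le w (stackSort R)
          rwa [stackSort_length] at this
        have hrle : rmaxG R ≤ R.length := rmaxG_le_length R
        have htle : tlG w (stackSort R) ≤ tlG w (stackSort L ++ stackSort R) :=
          tlG_append_le w (stackSort L) (stackSort R)
        rcases lt_or_eq_of_le htRle with hlt2 | heq2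
        · have : tlG w (stackSort L ++ stackSort R) = tlG w (stackSort R) := by
            apply tlG_append_eq
            rwa [stackSort_length]
          rw [this, hIH]
          omega
        · rw [hIH]
          omega
      · -- v - 1 ∉ R : chain stops, and tail is 0
        have hc0 : chainC (v - 1) R = 0 := by rw [chainC_eq, dif_neg hv1]
        have hwne : w ≠ v - 1 := fun he => hv1 (he ▸ hwR)
        have ht0 : tlG (v - 1) (stackSort L ++ stackSort R) = 0 := by
          rw [hY, ← List.append_assoc, tlG_concat, if_neg hwne]
        rw [hc0, ht0]
        omega

/-! ### Translation lemmas -/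

lemma findGreatest_eq_of {P : ℕ → Prop} {inst : DecidablePred P} {k m : ℕ} (h1 : m ≤ k)
    (h2 : m ≠ 0 → P m) (h3 : ∀ n, m < n → n ≤ k → ¬P n) : @Nat.findGreatest P inst k = m := by
  letI := inst
  exact Nat.findGreatest_eq_iff.mpr ⟨h1, h2, fun n a b => h3 n a b⟩

lemma rmax_eq_rmaxG (l : List ℕ) : rmax l = rmaxG l := by
  classical
  induction l with
  | nil => simp [rmax, rmaxG]
  | cons a t ih =>
    rw [rmax, List.length_cons, Finset.card_filter, Finset.sum_range_succ']
    have h0 : (∀ k', 0 < k' → k' < t.length + 1 → (a :: t).getD k' 0 < (a :: t).getD 0 0)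
        ↔ ∀ b ∈ t, b < a := by
      constructor
      · intro h b hb
        obtain ⟨i, hi, rfl⟩ := List.mem_iff_getElem.mp hb
        have := h (i + 1) (by omega) (by omega)
        rw [List.getD_cons_succ, List.getD_cons_zero, List.getD_eq_getElem _ _ hi] at this
        exact this
      · intro h k' hk0 hk1
        rw [List.getD_cons_zero]
        cases k' with
        | zero => omega
        | succ i =>
          rw [List.getD_cons_succ, List.getD_eq_getElem _ _ (by omega)]
          exact h _ (List.getElem_mem _)
    have hstep : ∀ i, ((∀ k', i + 1 < k' → k' < t.length + 1 →
          (a :: t).getD k' 0 < (a :: t).getD (i + 1) 0)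
        ↔ ∀ k', i < k' → k' < t.length → t.getD k' 0 < t.getD i 0) := by
      intro i
      constructor
      · intro h k' h1 h2
        have := h (k' + 1) (by omega) (by omega)
        simpa using this
      · intro h k' h1 h2
        cases k' with
        | zero => omega
        | succ j =>
          rw [List.getD_cons_succ, List.getD_cons_succ]
          exact h j (by omega) (by omega)
    have hsum : (∑ i ∈ Finset.range t.length,
          if (∀ k', i + 1 < k' → k' < t.length + 1 →
            (a :: t).getD k' 0 < (a :: t).getD (i + 1) 0) then 1 else 0) =
        (∑ i ∈ Finset.range t.length,
          if (∀ k', i < k' → k' < t.length → t.getD k' 0 < t.getD i 0) then 1 else 0) := by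
      refine Finset.sum_congr rfl fun i _ => ?_
      exact if_congr (hstep i) rfl rfl
    rw [hsum, ← Finset.card_filter, rmaxG_cons, if_congr h0 rfl rfl]
    rw [← ih, rmax]
    omega

lemma tl_eq_tlG (n : ℕ) (μ : List ℕ) (hlen : μ.length = n) : tl n μ = tlG n μ := by
  classical
  have hrlen : μ.reverse.length = n := by simpa using hlen
  have hgetD : ∀ i, i < n → μ.reverse.getD i 0 = μ.getD (n - 1 - i) 0 := by
    intro i hi
    rw [List.getD_eq_getElem _ _ (by omega), List.getD_eq_getElem _ _ (by omega)]
    rw [List.getElem_reverse]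
    congr 1
    omega
  set c := tlAux n μ.reverse with hc
  have hcle : c ≤ n := by rw [hc, ← hrlen]; exact tlAux_le _ _
  rw [tlG]
  unfold tl
  refine findGreatest_eq_of hcle ?_ ?_
  · intro hc0 j hj1 hjc
    have hi : c - j < c := by omega
    have := tlAux_spec μ.reverse n (c - j) hi
    rw [hgetD (c - j) (by omega)] at this
    rw [show n - c + j - 1 = n - 1 - (c - j) by omega, show n - c + j = n - (c - j) by omega]
    exact this
  · intro k hck hkn hP
    have hclt : c < n := by omega
    have hmax := tlAux_max μ.reverse n (by omega)
    have := hP (k - c) (by omega) (by omega)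
    rw [show n - k + (k - c) - 1 = n - 1 - c by omega, show n - k + (k - c) = n - c by omega] at this
    rw [hgetD c (by omega)] at hmax
    exact hmax this

lemma zeil_eq_chainC (n : ℕ) (l : List ℕ) (hlen : l.length = n) (hnd : l.Nodup)
    (hmem : ∀ x, x ∈ l ↔ 1 ≤ x ∧ x ≤ n) : zeil n l = chainC n l := by
  classical
  set c := chainC n l with hc
  have hpos : ∀ x ∈ l, 1 ≤ x := fun x hx => ((hmem x).mp hx).1
  have hcle : c ≤ n := chainC_le l.length l le_rfl hpos n
  unfold zeil
  refine findGreatest_eq_of hcle ?_ ?_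
  · intro hc0 j hj1 hjc
    have := chainC_ord l.length l le_rfl hnd n (j - 1) (by omega)
    rw [show n - (j - 1) - 1 = n - j by omega, show n - (j - 1) = n - j + 1 by omega] at this
    exact this
  · intro k hck hkn hP
    have : c + 1 ≤ c := by
      refine chainC_ge l.length l le_rfl hnd n (c + 1) ?_ ?_
      · intro i hi
        exact (hmem (n - i)).mpr ⟨by omega, by omega⟩
      · intro i hi
        have := hP (i + 1) (by omega) (by omega)
        rw [show n - (i + 1) + 1 = n - i by omega, show n - (i + 1) = n - i - 1 by omega] at this
        exact this
    omega
/-- `zeil(λ) = min(rmax(λ), tl(s(λ)))` for every `λ ∈ Sₙ`. -/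
theorem zeil_eq_min_rmax_tl (n : ℕ) (l : List ℕ) (hl : IsPermList n l) :
    zeil n l = min (rmax l) (tl n (stackSort l)) := by
  unfold IsPermList at hl
  rcases Nat.eq_zero_or_pos n with rfl | hn
  · have hnil : l = [] := by
      have := hl.length_eq
      simpa using List.length_eq_zero_iff.mp (by simpa using this)
    subst hnil
    have h1 : zeil 0 ([] : List ℕ) = 0 := rfl
    have h2 : rmax ([] : List ℕ) = 0 := by simp [rmax]
    rw [h1, h2]
    simp
  · have hlen : l.length = n := by simpa using hl.length_eq
    have hne : l ≠ [] := by
      intro h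
      rw [h] at hlen
      simp at hlen
      omega
    have hnd : l.Nodup := hl.nodup_iff.mpr (List.nodup_range' (s := 1) (n := n))
    have hmemiff : ∀ x, x ∈ l ↔ 1 ≤ x ∧ x ≤ n := by
      intro x
      rw [hl.mem_iff, List.mem_range'_1]
      omega
    have hpos : ∀ x ∈ l, 1 ≤ x := fun x hx => ((hmemiff x).mp hx).1
    have hmax : l.max?.getD 0 = n := by
      have h1 : n ≤ l.max?.getD 0 := le_max_getD ((hmemiff n).mpr ⟨hn, le_rfl⟩)
      have h2 : l.max?.getD 0 ≤ n := ((hmemiff _).mp (max_getD_mem l hne)).2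
      omega
    rw [zeil_eq_chainC n l hlen hnd hmemiff, rmax_eq_rmaxG,
      tl_eq_tlG n _ (by rw [stackSort_length, hlen])]
    have := main_aux l.length l le_rfl hnd hpos hne
    rwa [hmax] at this
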